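/- arXiv:1908.11851 — 2 statements merged into one kernel-verified Lean document; each statement's English description precedes it below -/
import Mathlib

section
/- Let A ∈ ℝ^{n×n}, and suppose W_{m+1} = [W_m, 𝒲_{m+1}] ∈ ℝ^{n×(r_m+r')} and Q_{m+1} = [Q_m, 𝒬_{m+1}] ∈ ℝ^{n×(q_m+q')} have orthonormal columns and satisfy the Arnoldi relations A Q_m = Q_m H_m + 𝒬_{m+1} G and A W_m = W_m T_m + 𝒲_{m+1} S, where H_m = Q_mᵀ A Q_m, T_m = W_mᵀ A W_m, G = 𝒬_{m+1}ᵀ A Q_m, S = 𝒲_{m+1}ᵀ A W_m. If Y solves the projected equation (T_m ⊗ I + I ⊗ H_m) Y − Y Σᵀ = C̃ for some Σ ∈ ℝ^{ℓ×ℓ} and C̃ = (W_m ⊗ Q_m)ᵀ C with C in the range of (W_m ⊗ Q_m) acting on the left, then the residual R = (A ⊗ I_n + I_n ⊗ A)(W_m ⊗ Q_m) Y − (W_m ⊗ Q_m) Y Σᵀ − C satisfies ‖R‖_F² = ‖(S ⊗ I) Y‖_F² + ‖(I ⊗ G) Y‖_F². -/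
open Matrix
open scoped Kronecker

attribute [local instance] Matrix.frobeniusNormedAddCommGroup

private lemma frob_sq {m n : Type*} [Fintype m] [Fintype n]
    (M : Matrix m n ℝ) : ‖M‖ ^ 2 = Matrix.trace (Mᵀ * M) := by
  have h : (0:ℝ) ≤ ∑ i, ∑ j, ‖M i j‖ ^ (2:ℝ) := by positivity
  rw [Matrix.frobenius_norm_def, ← Real.rpow_natCast _ 2, ← Real.rpow_mul h]
  norm_num
  rw [Matrix.trace]
  simp only [Matrix.diag, Matrix.mul_apply, Matrix.transpose_apply, Real.rpow_two,
    Real.norm_eq_abs, sq_abs, pow_two]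
  rw [Finset.sum_comm]

theorem stmt_14 {n r r' q q' ℓ : ℕ}
    (A : Matrix (Fin n) (Fin n) ℝ)
    (W : Matrix (Fin n) (Fin r) ℝ) (W' : Matrix (Fin n) (Fin r') ℝ)
    (Q : Matrix (Fin n) (Fin q) ℝ) (Q' : Matrix (Fin n) (Fin q') ℝ)
    (hW : Wᵀ * W = 1) (hW' : W'ᵀ * W' = 1) (hWW' : Wᵀ * W' = 0)
    (hQ : Qᵀ * Q = 1) (hQ' : Q'ᵀ * Q' = 1) (hQQ' : Qᵀ * Q' = 0)
    (H : Matrix (Fin q) (Fin q) ℝ) (hH : H = Qᵀ * A * Q)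
    (T : Matrix (Fin r) (Fin r) ℝ) (hT : T = Wᵀ * A * W)
    (G : Matrix (Fin q') (Fin q) ℝ) (hG : G = Q'ᵀ * A * Q)
    (S : Matrix (Fin r') (Fin r) ℝ) (hS : S = W'ᵀ * A * W)
    (harnQ : A * Q = Q * H + Q' * G)
    (harnW : A * W = W * T + W' * S)
    (Sig : Matrix (Fin ℓ) (Fin ℓ) ℝ)
    (C : Matrix (Fin n × Fin n) (Fin ℓ) ℝ)
    (hC : C = (W ⊗ₖ Q) * ((W ⊗ₖ Q)ᵀ * C))
    (Y : Matrix (Fin r × Fin q) (Fin ℓ) ℝ)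
    (hY : (T ⊗ₖ (1 : Matrix (Fin q) (Fin q) ℝ)
            + (1 : Matrix (Fin r) (Fin r) ℝ) ⊗ₖ H) * Y - Y * Sigᵀ = (W ⊗ₖ Q)ᵀ * C)
    (R : Matrix (Fin n × Fin n) (Fin ℓ) ℝ)
    (hR : R = (A ⊗ₖ (1 : Matrix (Fin n) (Fin n) ℝ)
            + (1 : Matrix (Fin n) (Fin n) ℝ) ⊗ₖ A) * ((W ⊗ₖ Q) * Y)
          - (W ⊗ₖ Q) * Y * Sigᵀ - C) :
    ‖R‖ ^ 2 = ‖(S ⊗ₖ (1 : Matrix (Fin q) (Fin q) ℝ)) * Y‖ ^ 2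
        + ‖((1 : Matrix (Fin r) (Fin r) ℝ) ⊗ₖ G) * Y‖ ^ 2 := by
  have e1 : (A ⊗ₖ (1 : Matrix (Fin n) (Fin n) ℝ)) * (W ⊗ₖ Q)
      = (W ⊗ₖ Q) * (T ⊗ₖ (1 : Matrix (Fin q) (Fin q) ℝ))
        + (W' ⊗ₖ Q) * (S ⊗ₖ (1 : Matrix (Fin q) (Fin q) ℝ)) := by
    calc (A ⊗ₖ (1 : Matrix (Fin n) (Fin n) ℝ)) * (W ⊗ₖ Q)
        = (A * W) ⊗ₖ ((1 : Matrix (Fin n) (Fin n) ℝ) * Q) :=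
          (Matrix.mul_kronecker_mul _ _ _ _).symm
      _ = (W * T) ⊗ₖ (Q * (1 : Matrix (Fin q) (Fin q) ℝ))
        + (W' * S) ⊗ₖ (Q * (1 : Matrix (Fin q) (Fin q) ℝ)) := by
          rw [harnW, Matrix.one_mul, Matrix.mul_one, Matrix.add_kronecker]
      _ = _ := by rw [Matrix.mul_kronecker_mul, Matrix.mul_kronecker_mul]
  have e2 : ((1 : Matrix (Fin n) (Fin n) ℝ) ⊗ₖ A) * (W ⊗ₖ Q)
      = (W ⊗ₖ Q) * ((1 : Matrix (Fin r) (Fin r) ℝ) ⊗ₖ H)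
        + (W ⊗ₖ Q') * ((1 : Matrix (Fin r) (Fin r) ℝ) ⊗ₖ G) := by
    calc ((1 : Matrix (Fin n) (Fin n) ℝ) ⊗ₖ A) * (W ⊗ₖ Q)
        = ((1 : Matrix (Fin n) (Fin n) ℝ) * W) ⊗ₖ (A * Q) :=
          (Matrix.mul_kronecker_mul _ _ _ _).symm
      _ = (W * (1 : Matrix (Fin r) (Fin r) ℝ)) ⊗ₖ (Q * H)
        + (W * (1 : Matrix (Fin r) (Fin r) ℝ)) ⊗ₖ (Q' * G) := by
          rw [harnQ, Matrix.one_mul, Matrix.mul_one, Matrix.kronecker_add]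
      _ = _ := by rw [Matrix.mul_kronecker_mul, Matrix.mul_kronecker_mul]
  have hYC : (W ⊗ₖ Q) * ((T ⊗ₖ (1 : Matrix (Fin q) (Fin q) ℝ)
      + (1 : Matrix (Fin r) (Fin r) ℝ) ⊗ₖ H) * Y) - (W ⊗ₖ Q) * (Y * Sigᵀ) = C := by
    rw [← Matrix.mul_sub, hY, ← hC]
  have hR2 : R = (W' ⊗ₖ Q) * ((S ⊗ₖ (1 : Matrix (Fin q) (Fin q) ℝ)) * Y)
      + (W ⊗ₖ Q') * (((1 : Matrix (Fin r) (Fin r) ℝ) ⊗ₖ G) * Y) := by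
    rw [hR, Matrix.add_mul, ← Matrix.mul_assoc, ← Matrix.mul_assoc, e1, e2, ← hYC]
    simp only [Matrix.add_mul, Matrix.mul_add, Matrix.mul_assoc]
    abel
  have tU1 : (W' ⊗ₖ Q)ᵀ = W'ᵀ ⊗ₖ Qᵀ := (Matrix.kroneckerMap_transpose _ _ _).symm
  have tU2 : (W ⊗ₖ Q')ᵀ = Wᵀ ⊗ₖ Q'ᵀ := (Matrix.kroneckerMap_transpose _ _ _).symm
  have hU1 : ∀ M : Matrix (Fin r' × Fin q) (Fin ℓ) ℝ, (W' ⊗ₖ Q)ᵀ * ((W' ⊗ₖ Q) * M) = M := by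
    intro M
    rw [← Matrix.mul_assoc, tU1, ← Matrix.mul_kronecker_mul, hW', hQ,
      Matrix.one_kronecker_one, Matrix.one_mul]
  have hU2 : ∀ M : Matrix (Fin r × Fin q') (Fin ℓ) ℝ, (W ⊗ₖ Q')ᵀ * ((W ⊗ₖ Q') * M) = M := by
    intro M
    rw [← Matrix.mul_assoc, tU2, ← Matrix.mul_kronecker_mul, hW, hQ',
      Matrix.one_kronecker_one, Matrix.one_mul]
  have hU12 : ∀ M : Matrix (Fin r × Fin q') (Fin ℓ) ℝ, (W' ⊗ₖ Q)ᵀ * ((W ⊗ₖ Q') * M) = 0 := by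
    intro M
    rw [← Matrix.mul_assoc, tU1, ← Matrix.mul_kronecker_mul, hQQ',
      Matrix.kronecker_zero, Matrix.zero_mul]
  have hU21 : ∀ M : Matrix (Fin r' × Fin q) (Fin ℓ) ℝ, (W ⊗ₖ Q')ᵀ * ((W' ⊗ₖ Q) * M) = 0 := by
    intro M
    rw [← Matrix.mul_assoc, tU2, ← Matrix.mul_kronecker_mul, hWW',
      Matrix.zero_kronecker, Matrix.zero_mul]
  rw [frob_sq, frob_sq, frob_sq, hR2]
  simp only [Matrix.transpose_add, Matrix.transpose_mul, Matrix.add_mul, Matrix.mul_add,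
    Matrix.mul_assoc, hU1, hU2, hU12, hU21, Matrix.mul_zero, Matrix.trace_add,
    Matrix.trace_zero, add_zero, zero_add]
end

section
/- Let V_m ∈ ℝ^{N×r} have orthonormal columns and suppose the rational-Arnoldi relation A V_m = V_m T_m + 𝒱_{m+1} E ξ H̄ H⁻¹ − (I − V_m V_mᵀ) A 𝒱_{m+1} E H̄ H⁻¹ holds, where T_m = V_mᵀ A V_m, 𝒱_{m+1} has orthonormal columns orthogonal to V_m, ξ ∈ ℝ, and E H̄ H⁻¹ ∈ ℝ^{p×r} is a given matrix B. If Y solves T_m Y − Y Σᵀ = V_mᵀ C with C = V_m V_mᵀ C, then the residual R_m = A V_m Y − V_m Y Σᵀ − C satisfies R_m = (ξ I − (I − V_m V_mᵀ) A) 𝒱_{m+1} B Y, and hence ‖R_m‖_F = ‖(ξ I − (I − V_m V_mᵀ) A) 𝒱_{m+1} B Y‖_F. -/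
open Matrix

attribute [local instance] Matrix.frobeniusNormedAddCommGroup

theorem stmt_17 {N r p ℓ : ℕ}
    (A : Matrix (Fin N) (Fin N) ℝ)
    (V : Matrix (Fin N) (Fin r) ℝ) (hV : Vᵀ * V = 1)
    (T : Matrix (Fin r) (Fin r) ℝ) (hT : T = Vᵀ * A * V)
    (V' : Matrix (Fin N) (Fin p) ℝ) (hV' : V'ᵀ * V' = 1) (hVV' : Vᵀ * V' = 0)
    (ξ : ℝ) (B : Matrix (Fin p) (Fin r) ℝ)
    (harn : A * V = V * T + V' * (ξ • B)
              - ((1 : Matrix (Fin N) (Fin N) ℝ) - V * Vᵀ) * A * (V' * B))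
    (Sig : Matrix (Fin ℓ) (Fin ℓ) ℝ)
    (C : Matrix (Fin N) (Fin ℓ) ℝ) (hC : C = V * (Vᵀ * C))
    (Y : Matrix (Fin r) (Fin ℓ) ℝ)
    (hY : T * Y - Y * Sigᵀ = Vᵀ * C)
    (Rm : Matrix (Fin N) (Fin ℓ) ℝ)
    (hRm : Rm = A * (V * Y) - (V * Y) * Sigᵀ - C) :
    Rm = (ξ • (1 : Matrix (Fin N) (Fin N) ℝ)
            - ((1 : Matrix (Fin N) (Fin N) ℝ) - V * Vᵀ) * A) * (V' * (B * Y))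
      ∧ ‖Rm‖ = ‖(ξ • (1 : Matrix (Fin N) (Fin N) ℝ)
            - ((1 : Matrix (Fin N) (Fin N) ℝ) - V * Vᵀ) * A) * (V' * (B * Y))‖ := by
  have hAVY : A * (V * Y)
      = V * (T * Y) + ξ • (V' * (B * Y))
        - ((1 : Matrix (Fin N) (Fin N) ℝ) - V * Vᵀ) * A * (V' * (B * Y)) := by
    calc A * (V * Y) = (A * V) * Y := by rw [Matrix.mul_assoc]
      _ = _ := by
        rw [harn]
        simp [Matrix.sub_mul, Matrix.add_mul, Matrix.mul_assoc, Matrix.smul_mul,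
          Matrix.mul_smul]
  have key : Rm = ξ • (V' * (B * Y))
      - ((1 : Matrix (Fin N) (Fin N) ℝ) - V * Vᵀ) * A * (V' * (B * Y)) := by
    have hVC : V * (T * Y) - (V * Y) * Sigᵀ = C := by
      have h2 : V * (T * Y) - V * (Y * Sigᵀ) = C := by
        rw [← Matrix.mul_sub, hY, ← hC]
      simpa [Matrix.mul_assoc] using h2
    rw [hRm, hAVY]
    rw [show V * (T * Y) + ξ • (V' * (B * Y))
        - (1 - V * Vᵀ) * A * (V' * (B * Y)) - V * Y * Sigᵀ - C
      = (V * (T * Y) - (V * Y) * Sigᵀ) - C + (ξ • (V' * (B * Y))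
        - (1 - V * Vᵀ) * A * (V' * (B * Y))) by abel, hVC]
    abel
  have hEq : Rm = (ξ • (1 : Matrix (Fin N) (Fin N) ℝ)
      - ((1 : Matrix (Fin N) (Fin N) ℝ) - V * Vᵀ) * A) * (V' * (B * Y)) := by
    rw [key]
    simp [Matrix.sub_mul, Matrix.smul_mul, Matrix.mul_assoc, Matrix.mul_sub]
  exact ⟨hEq, by rw [hEq]⟩
end
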